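/- Let G be a connected unmixed bipartite graph on V_n = {x_1,...,x_n} ∪ {y_1,...,y_n} with an induced K_{m,m} (m ≥ 2) on {x_1,...,x_m} ∪ {y_1,...,y_m}, such that no other induced K_{r,r} (r ≥ 2) of the form {x_{i_1},...,x_{i_r}} ∪ {y_{i_1},...,y_{i_r}} exists outside this one. Then the induced subgraph H of G on V_n \ ({x_1,...,x_{m-1}} ∪ {y_1,...,y_{m-1}}) is connected. -/

import Mathlib

/-- The simple bipartite graph on `Fin n ⊕ Fin n` with `x_i = Sum.inl i`, `y_j = Sum.inr j`,
and an edge `{x_i, y_j}` whenever `E i j`. -/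
def bipGraph (n : ℕ) (E : Fin n → Fin n → Prop) : SimpleGraph (Fin n ⊕ Fin n) where
  Adj v w := (∃ i j, v = Sum.inl i ∧ w = Sum.inr j ∧ E i j) ∨
             (∃ i j, v = Sum.inr j ∧ w = Sum.inl i ∧ E i j)
  symm := by
    refine ⟨?_⟩
    rintro v w (⟨i, j, h1, h2, h⟩ | ⟨i, j, h1, h2, h⟩)
    · exact Or.inr ⟨i, j, h2, h1, h⟩
    · exact Or.inl ⟨i, j, h2, h1, h⟩
  loopless := by
    refine ⟨?_⟩
    intro v h
    rcases h with ⟨i, j, h1, h2, _⟩ | ⟨i, j, h1, h2, _⟩ <;> subst h1 <;> simp_all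

/-- if the connected unmixed bipartite graph `G` has an induced `K_{m,m}`
on `{x_1,…,x_m} ∪ {y_1,…,y_m}` and every induced `K_{r,r}` (`r ≥ 2`) of the given form lives
inside it, then the induced subgraph `H` on `V_n \ ({x_1,…,x_{m-1}} ∪ {y_1,…,y_{m-1}})`
is connected. -/
theorem stmt7 (n m : ℕ) (hm : 2 ≤ m) (hn : m ≤ n) (E : Fin n → Fin n → Prop)
    (hrefl : ∀ i, E i i)
    (htrans : ∀ i j k : Fin n, i ≠ j → j ≠ k → i ≠ k → E i j → E j k → E i k)
    (hone : ∀ C : Set (Fin n ⊕ Fin n), (∀ i j, E i j → Sum.inl i ∈ C ∨ Sum.inr j ∈ C) →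
      (∀ D ⊂ C, ¬ ∀ i j, E i j → Sum.inl i ∈ D ∨ Sum.inr j ∈ D) → C.ncard = n)
    (hconn : (bipGraph n E).Connected)
    (hK : ∀ i j : Fin n, i.val < m → j.val < m → E i j)
    (huniq : ∀ r : ℕ, 2 ≤ r → ∀ f : Fin r → Fin n, Function.Injective f →
      (∀ a b : Fin r, E (f a) (f b)) → ∀ a, (f a).val < m) :
    (SimpleGraph.induce {v : Fin n ⊕ Fin n | m - 1 ≤ Sum.elim Fin.val Fin.val v}
      (bipGraph n E)).Connected := by
  classical
  set S : Set (Fin n ⊕ Fin n) := {v : Fin n ⊕ Fin n | m - 1 ≤ Sum.elim Fin.val Fin.val v}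
  have hMlt : m - 1 < n := by omega
  set M : Fin n := ⟨m - 1, hMlt⟩ with hM
  have hMval : (M : ℕ) = m - 1 := rfl
  set f : Fin n → Fin n := fun i => if m - 1 ≤ i.val then i else M with hf
  have hfmem : ∀ i, m - 1 ≤ (f i).val := by
    intro i; simp only [hf]; split
    · assumption
    · exact le_of_eq hMval.symm
  have key : ∀ i j, E i j → E (f i) (f j) := by
    intro i j h
    simp only [hf]
    split <;> split
    · exact h
    · rename_i hi hj
      by_cases hiM : i = M
      · subst hiM; exact hrefl M
      · refine htrans i j M ?_ ?_ hiM h (hK j M (by omega) (by rw [hMval]; omega))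
        · intro e; subst e; omega
        · intro e; subst e; exact hj le_rfl
    · rename_i hi hj
      by_cases hjM : j = M
      · subst hjM; exact hrefl M
      · refine htrans M i j ?_ ?_ (Ne.symm hjM) (hK M i (by rw [hMval]; omega) (by omega)) h
        · intro e; rw [← e] at hi; exact hi le_rfl
        · intro e; subst e; omega
    · exact hrefl M
  let φfun : (Fin n ⊕ Fin n) → S := fun v =>
    match v with
    | Sum.inl i => ⟨Sum.inl (f i), hfmem i⟩
    | Sum.inr j => ⟨Sum.inr (f j), hfmem j⟩
  have hφ : ∀ v w, (bipGraph n E).Adj v w →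
      (SimpleGraph.induce S (bipGraph n E)).Adj (φfun v) (φfun w) := by
    rintro v w (⟨i, j, rfl, rfl, h⟩ | ⟨i, j, rfl, rfl, h⟩)
    · exact Or.inl ⟨f i, f j, rfl, rfl, key i j h⟩
    · exact Or.inr ⟨f i, f j, rfl, rfl, key i j h⟩
  let φ : bipGraph n E →g SimpleGraph.induce S (bipGraph n E) :=
    ⟨φfun, fun h => hφ _ _ h⟩
  have hfix : ∀ u : S, φ u.val = u := by
    rintro ⟨(i | j), hu⟩
    · simp only [S, Set.mem_setOf_eq, Sum.elim_inl] at hu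
      refine Subtype.ext ?_
      show Sum.inl (f i) = Sum.inl i
      simp only [hf]
      exact congrArg Sum.inl (if_pos hu)
    · simp only [S, Set.mem_setOf_eq, Sum.elim_inr] at hu
      refine Subtype.ext ?_
      show Sum.inr (f j) = Sum.inr j
      simp only [hf]
      exact congrArg Sum.inr (if_pos hu)
  rw [SimpleGraph.connected_iff]
  refine ⟨?_, ⟨⟨Sum.inl M, le_of_eq hMval.symm⟩⟩⟩
  intro u v
  have := (hconn.preconnected u.val v.val).map φ
  rwa [hfix u, hfix v] at this
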